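/- Let U ⊆ ℝ^(n+2) be open, (ξ, N) a null frame on U, θ : U → ℝ differentiable and nowhere zero, and suppose the field Z := ξ + θ • N is closed conformal with factor φ : U → ℝ, i.e. fderiv ℝ Z p = φ(p) • id for all p ∈ U. Then for every p ∈ U and every screen vector v at p: (a) D_v θ(p) = 0 and τ_p(v) = 0; (b) A_N(p)(v) = -(1/θ(p)) • A*_ξ(p)(v) - (φ(p)/θ(p)) • v. (Flat-Minkowski-ambient form of the paper's theorem that a closed conformal field which is nowhere tangent and nowhere null induces a screen quasi-conformal structure with τ vanishing on the screen.) -/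

import Mathlib

open scoped BigOperators

noncomputable section

/-- Euclidean space `ℝ^m`. -/
abbrev E (m : ℕ) : Type := EuclideanSpace ℝ (Fin m)

/-- The Minkowski bilinear form `η(x,y) = -(x 0)(y 0) + ∑_{i≥1} (x i)(y i)` on `ℝ^(n+2)`. -/
def eta {n : ℕ} (x y : E (n + 2)) : ℝ :=
  (∑ i, x i * y i) - 2 * (x 0 * y 0)

/-- Screen projection `P_p(w) = w - η(w,N)ξ - η(w,ξ)N` determined by the null frame at a point. -/
def sproj {n : ℕ} (xi N w : E (n + 2)) : E (n + 2) :=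
  w - eta w N • xi - eta w xi • N

/-- Screen shape operator `A*_ξ(p)(v) = -P_p(D_v ξ (p))`. -/
def Astar {n : ℕ} (xi N : E (n + 2) → E (n + 2)) (p v : E (n + 2)) : E (n + 2) :=
  -sproj (xi p) (N p) (fderiv ℝ xi p v)

/-- Shape operator `A_N(p)(v) = -P_p(D_v N (p))`. -/
def AN {n : ℕ} (xi N : E (n + 2) → E (n + 2)) (p v : E (n + 2)) : E (n + 2) :=
  -sproj (xi p) (N p) (fderiv ℝ N p v)

/-- Transversal one-form `τ_p(v) = η(D_v N(p), ξ p)`. -/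
def tau {n : ℕ} (xi N : E (n + 2) → E (n + 2)) (p v : E (n + 2)) : ℝ :=
  eta (fderiv ℝ N p v) (xi p)

/-- Screen part `Z*(p) = P_p(Z p)` of a vector field. -/
def Zstar {n : ℕ} (xi N Z : E (n + 2) → E (n + 2)) (p : E (n + 2)) : E (n + 2) :=
  sproj (xi p) (N p) (Z p)

/-- `A_{Z⊥}(p)(v) = η(Z p, N p) • A*_ξ(p)(v) + η(Z p, ξ p) • A_N(p)(v)`. -/
def AZperp {n : ℕ} (xi N Z : E (n + 2) → E (n + 2)) (p v : E (n + 2)) : E (n + 2) :=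
  eta (Z p) (N p) • Astar xi N p v + eta (Z p) (xi p) • AN xi N p v

lemma eta_comm {n : ℕ} (x y : E (n+2)) : eta x y = eta y x := by
  simp [eta, mul_comm]

lemma eta_add_left {n : ℕ} (x x' y : E (n+2)) : eta (x + x') y = eta x y + eta x' y := by
  simp [eta, add_mul, Finset.sum_add_distrib]; ring

lemma eta_smul_left {n : ℕ} (c : ℝ) (x y : E (n+2)) : eta (c • x) y = c * eta x y := by
  simp only [eta, PiLp.smul_apply, smul_eq_mul, mul_sub, Finset.mul_sum]
  congr 1
  · exact Finset.sum_congr rfl fun i _ => by ring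
  · ring

lemma eta_neg_left {n : ℕ} (x y : E (n+2)) : eta (-x) y = -eta x y := by
  rw [← neg_one_smul ℝ x, eta_smul_left]; ring

lemma eta_sub_left {n : ℕ} (x x' y : E (n+2)) : eta (x - x') y = eta x y - eta x' y := by
  rw [sub_eq_add_neg, eta_add_left, eta_neg_left, sub_eq_add_neg]

def etaL {n : ℕ} : E (n+2) →ₗ[ℝ] E (n+2) →ₗ[ℝ] ℝ :=
  LinearMap.mk₂ ℝ eta eta_add_left (fun c x y => by rw [eta_smul_left]; rfl)
    (fun x y y' => by rw [eta_comm, eta_add_left, eta_comm y, eta_comm y'])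
    (fun c x y => by rw [eta_comm, eta_smul_left, eta_comm]; rfl)

def etaCLM {n : ℕ} : E (n+2) →L[ℝ] E (n+2) →L[ℝ] ℝ :=
  LinearMap.toContinuousLinearMap
    (((LinearMap.toContinuousLinearMap : (E (n+2) →ₗ[ℝ] ℝ) ≃ₗ[ℝ] _)).toLinearMap.comp etaL)

@[simp] lemma etaCLM_apply {n : ℕ} (x y : E (n+2)) : etaCLM x y = eta x y := rfl

lemma fderiv_eta_apply {n : ℕ} {f g : E (n+2) → E (n+2)} {p v : E (n+2)}
    (hf : DifferentiableAt ℝ f p) (hg : DifferentiableAt ℝ g p) :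
    fderiv ℝ (fun q => eta (f q) (g q)) p v
      = eta (fderiv ℝ f p v) (g p) + eta (f p) (fderiv ℝ g p v) := by
  have h := ((etaCLM (n := n)).isBoundedBilinearMap.hasFDerivAt (f p, g p)).comp p
    (HasFDerivAt.prodMk hf.hasFDerivAt hg.hasFDerivAt)
  have h2 : HasFDerivAt (fun q => eta (f q) (g q))
      (((etaCLM (n := n)).isBoundedBilinearMap.deriv (f p, g p)).comp
        ((fderiv ℝ f p).prod (fderiv ℝ g p))) p := h
  rw [h2.fderiv]
  simp [IsBoundedBilinearMap.deriv_apply, add_comm]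

lemma sproj_smul {n : ℕ} (xi Np : E (n+2)) (c : ℝ) (w : E (n+2)) :
    sproj xi Np (c • w) = c • sproj xi Np w := by
  simp [sproj, eta_smul_left, smul_sub, mul_smul]

lemma sproj_sub {n : ℕ} (xi Np : E (n+2)) (w w' : E (n+2)) :
    sproj xi Np (w - w') = sproj xi Np w - sproj xi Np w' := by
  simp only [sproj, eta_sub_left, sub_smul]; abel


/-- A closed conformal field of the form `Z = ξ + θ N` (nowhere tangent,
nowhere null) induces a screen quasi-conformal structure with `τ` vanishing on the screen
(flat Minkowski ambient form). -/
theorem cc_field_induces_screen_quasi_conformal {n : ℕ}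
    (U : Set (E (n + 2))) (hU : IsOpen U)
    (ξ N : E (n + 2) → E (n + 2)) (θ φ : E (n + 2) → ℝ)
    (hξd : ∀ p ∈ U, DifferentiableAt ℝ ξ p)
    (hNd : ∀ p ∈ U, DifferentiableAt ℝ N p)
    (hθd : ∀ p ∈ U, DifferentiableAt ℝ θ p)
    (hθ0 : ∀ p ∈ U, θ p ≠ 0)
    (hξξ : ∀ p ∈ U, eta (ξ p) (ξ p) = 0)
    (hNN : ∀ p ∈ U, eta (N p) (N p) = 0)
    (hξN : ∀ p ∈ U, eta (ξ p) (N p) = 1)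
    (hCC : ∀ p ∈ U, fderiv ℝ (fun q => ξ q + θ q • N q) p
      = φ p • ContinuousLinearMap.id ℝ (E (n + 2))) :
    ∀ p ∈ U, ∀ v : E (n + 2), eta v (ξ p) = 0 → eta v (N p) = 0 →
      (fderiv ℝ θ p v = 0 ∧ tau ξ N p v = 0) ∧
      AN ξ N p v = (-(1 / θ p)) • Astar ξ N p v - (φ p / θ p) • v := by
  intro p hp v hvξ hvN
  have hdξ := hξd p hp
  have hdN := hNd p hp
  have hdθ := hθd p hp
  have hθ := hθ0 p hp
  set ξ' := fderiv ℝ ξ p v with hξ'def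
  set N' := fderiv ℝ N p v with hN'def
  set θ' := fderiv ℝ θ p v with hθ'def
  -- the CC equation applied to v
  have hEq : ξ' + (θ p • N' + θ' • N p) = φ p • v := by
    have h2 : fderiv ℝ (fun q => ξ q + θ q • N q) p v = φ p • v := by
      rw [hCC p hp]; simp
    rw [fderiv_fun_add (g := fun q => θ q • N q) hdξ (hdθ.smul hdN)] at h2
    rw [fderiv_fun_smul hdθ hdN] at h2
    simpa using h2
  -- derivatives of the constant frame relations
  have hNN' : eta N' (N p) = 0 := by
    have hev : (fun q => eta (N q) (N q)) =ᶠ[nhds p] fun _ => (0:ℝ) := by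
      filter_upwards [hU.mem_nhds hp] with q hq using hNN q hq
    have h0 : fderiv ℝ (fun q => eta (N q) (N q)) p v = 0 := by
      rw [hev.fderiv_eq]; simp
    rw [fderiv_eta_apply hdN hdN] at h0
    have hc := eta_comm (N p) N'
    rw [← hN'def] at h0
    linarith
  have hξξ' : eta ξ' (ξ p) = 0 := by
    have hev : (fun q => eta (ξ q) (ξ q)) =ᶠ[nhds p] fun _ => (0:ℝ) := by
      filter_upwards [hU.mem_nhds hp] with q hq using hξξ q hq
    have h0 : fderiv ℝ (fun q => eta (ξ q) (ξ q)) p v = 0 := by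
      rw [hev.fderiv_eq]; simp
    rw [fderiv_eta_apply hdξ hdξ] at h0
    have hc := eta_comm (ξ p) ξ'
    rw [← hξ'def] at h0
    linarith
  have hξN' : eta ξ' (N p) + eta (ξ p) N' = 0 := by
    have hev : (fun q => eta (ξ q) (N q)) =ᶠ[nhds p] fun _ => (1:ℝ) := by
      filter_upwards [hU.mem_nhds hp] with q hq using hξN q hq
    have h0 : fderiv ℝ (fun q => eta (ξ q) (N q)) p v = 0 := by
      rw [hev.fderiv_eq]; simp
    rw [fderiv_eta_apply hdξ hdN] at h0
    rw [← hξ'def, ← hN'def] at h0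
    exact h0
  have hNξ : eta (N p) (ξ p) = 1 := by rw [eta_comm]; exact hξN p hp
  -- pair hEq with N p
  have e1 : eta ξ' (N p) = 0 := by
    have h := congrArg (fun w => eta w (N p)) hEq
    simpa [eta_add_left, eta_smul_left, hNN p hp, hvN, hNN'] using h
  have htau : eta N' (ξ p) = 0 := by
    rw [eta_comm]
    linarith
  -- pair hEq with ξ p
  have e2 : θ' = 0 := by
    have h := congrArg (fun w => eta w (ξ p)) hEq
    simp only [eta_add_left, eta_smul_left, hξξ', htau, hNξ, hvξ, eta_smul_left] at h
    simp at h
    linarith [h]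
  refine ⟨⟨e2, htau⟩, ?_⟩
  -- part (b)
  have hθN' : θ p • N' = φ p • v - ξ' := by
    rw [e2, zero_smul, add_zero] at hEq
    exact eq_sub_of_add_eq' hEq
  have hv : sproj (ξ p) (N p) v = v := by simp [sproj, hvξ, hvN]
  have h1 : θ p • sproj (ξ p) (N p) N' = φ p • v - sproj (ξ p) (N p) ξ' := by
    rw [← sproj_smul, hθN', sproj_sub, sproj_smul, hv]
  have h2 : sproj (ξ p) (N p) N' = (θ p)⁻¹ • (φ p • v - sproj (ξ p) (N p) ξ') := by
    rw [← h1, smul_smul, inv_mul_cancel₀ hθ, one_smul]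
  simp only [AN, Astar, ← hξ'def, ← hN'def]
  rw [h2]
  match_scalars <;> field_simp


end
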